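/- Let t ≥ 1 be an integer and let H_0 and H_1 be edge-disjoint matchings with |E(H_0)| = |E(H_1)| = t. Then there exist orderings ℓ_0 of H_0 and ℓ_1 of H_1 such that cms(ℓ_0 ∨ ℓ_1) ≥ t − 1. -/

import Mathlib

open SimpleGraph

/-- Two edges are adjacent if they are distinct and share a vertex. -/
def EdgesAdj {V : Type*} (e e' : Sym2 V) : Prop :=
  e ≠ e' ∧ ∃ v : V, v ∈ e ∧ v ∈ e'

/-- `ms` of an ordering of a graph, the ordering being given as the list of edges
in increasing label order: the largest `s ∈ {1,…,m}` such that any ordered pair of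
adjacent edges `(e,e')` with `ℓ(e) < ℓ(e')` has forward distance at least `s`. -/
noncomputable def msList {V : Type*} (L : List (Sym2 V)) : ℕ :=
  sSup {s | 1 ≤ s ∧ s ≤ L.length ∧ ∀ i j e e', i < j →
    L[i]? = some e → L[j]? = some e' → EdgesAdj e e' → s ≤ j - i}

/-- `cms` of an ordering of a graph: the largest `s ∈ {1,…,m}` such that every pair of
adjacent edges is at cyclic distance at least `s`. -/
noncomputable def cmsList {V : Type*} (L : List (Sym2 V)) : ℕ :=
  sSup {s | 1 ≤ s ∧ s ≤ L.length ∧ ∀ i j e e', i < j →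
    L[i]? = some e → L[j]? = some e' → EdgesAdj e e' →
    s ≤ min (j - i) (L.length - (j - i))}

/-- `L` is an ordering of `G`: it lists every edge of `G` exactly once. -/
def IsOrdering {V : Type*} (G : SimpleGraph V) (L : List (Sym2 V)) : Prop :=
  L.Nodup ∧ ∀ e, e ∈ L ↔ e ∈ G.edgeSet

/-- Cyclic matching sequenceability of a graph: the maximum of `cmsList` over orderings. -/
noncomputable def cms {V : Type*} (G : SimpleGraph V) : ℕ :=
  sSup {k | ∃ L, IsOrdering G L ∧ cmsList L = k}

/-- Number of edges of a graph. -/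
noncomputable def numEdges {V : Type*} (G : SimpleGraph V) : ℕ :=
  Nat.card G.edgeSet

/-- The chromatic index: the least number of colours in a proper edge colouring. -/
noncomputable def chromaticIndex {V : Type*} (G : SimpleGraph V) : ℕ :=
  sInf {c | ∃ f : G.edgeSet → Fin c, ∀ e e' : G.edgeSet, EdgesAdj e.1 e'.1 → f e ≠ f e'}

/-- The edge set of `G` forms a matching (no two distinct edges share a vertex). -/
def IsMatchingGraph {V : Type*} (G : SimpleGraph V) : Prop :=
  ∀ e ∈ G.edgeSet, ∀ e' ∈ G.edgeSet, ¬ EdgesAdj e e'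

/-- `G` is regular of degree `d`. -/
def IsRegularGraph {V : Type*} (G : SimpleGraph V) (d : ℕ) : Prop :=
  ∀ v : V, Nat.card (G.neighborSet v) = d

/-- A finite set of edges of `G` forming a matching. -/
def IsMatchingSet {V : Type*} (G : SimpleGraph V) (M : Finset (Sym2 V)) : Prop :=
  ↑M ⊆ G.edgeSet ∧ ∀ e ∈ M, ∀ e' ∈ M, ¬ EdgesAdj e e'

/-- The matching number of a graph. -/
noncomputable def matchingNumber {V : Type*} (G : SimpleGraph V) : ℕ :=
  sSup {k | ∃ M : Finset (Sym2 V), IsMatchingSet G M ∧ M.card = k}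
section AuxDev
variable {V : Type*}

private lemma aux_adj_symm {e f : Sym2 V} (h : EdgesAdj e f) : EdgesAdj f e := by
  obtain ⟨hne, v, h1, h2⟩ := h
  exact ⟨hne.symm, v, h2, h1⟩

private lemma aux_getElem_congr {w : List (Sym2 V)} {x y : ℕ} (hx : x < w.length)
    (hy : y < w.length) (h : x = y) : w[x]'hx = w[y]'hy := by subst h; rfl

private lemma aux_three {B : Finset (Sym2 V)} (hB : ∀ e ∈ B, ∀ f ∈ B, ¬ EdgesAdj e f)
    {e f1 f2 f3 : Sym2 V} (h1 : f1 ∈ B) (h2 : f2 ∈ B) (h3 : f3 ∈ B)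
    (a1 : EdgesAdj e f1) (a2 : EdgesAdj e f2) (a3 : EdgesAdj e f3)
    (d12 : f1 ≠ f2) (d13 : f1 ≠ f3) (d23 : f2 ≠ f3) : False := by
  induction e using Sym2.inductionOn with
  | _ u v =>
    obtain ⟨-, x1, hx1, hf1⟩ := a1
    obtain ⟨-, x2, hx2, hf2⟩ := a2
    obtain ⟨-, x3, hx3, hf3⟩ := a3
    rw [Sym2.mem_iff] at hx1 hx2 hx3
    rcases hx1 with rfl | rfl <;> rcases hx2 with rfl | rfl <;> rcases hx3 with rfl | rfl <;>
      first
        | exact hB _ h1 _ h2 ⟨d12, _, hf1, hf2⟩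
        | exact hB _ h1 _ h3 ⟨d13, _, hf1, hf3⟩
        | exact hB _ h2 _ h3 ⟨d23, _, hf2, hf3⟩

private def AuxPW (A B : Finset (Sym2 V)) (w : List (Sym2 V)) : Prop :=
  w.Nodup ∧ (∀ x ∈ w, x ∈ A ∨ x ∈ B) ∧ w.Chain' EdgesAdj

private def AuxClosed (A B : Finset (Sym2 V)) (w : List (Sym2 V)) : Prop :=
  ∀ e, (e ∈ A ∨ e ∈ B) → ∀ x ∈ w, EdgesAdj x e → e ∈ w

private def AuxAligned (L0 L1 : List (Sym2 V)) : Prop :=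
  ∀ p q e f, L0[p]? = some e → L1[q]? = some f → EdgesAdj e f → p ≤ q + 1 ∧ q ≤ p + 1

private lemma aux_pw_swap {A B : Finset (Sym2 V)} {w : List (Sym2 V)} (h : AuxPW A B w) :
    AuxPW B A w := ⟨h.1, fun x hx => (h.2.1 x hx).symm, h.2.2⟩

private lemma aux_closed_swap {A B : Finset (Sym2 V)} {w : List (Sym2 V)}
    (h : AuxClosed A B w) : AuxClosed B A w := fun e he => h e he.symm

private lemma aux_aligned_symm {L0 L1 : List (Sym2 V)} (h : AuxAligned L0 L1) :
    AuxAligned L1 L0 := fun p q e f he hf hadj =>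
  ⟨(h q p f e hf he (aux_adj_symm hadj)).2, (h q p f e hf he (aux_adj_symm hadj)).1⟩

private lemma aux_chain_adj {w : List (Sym2 V)} (hc : w.Chain' EdgesAdj) {i : ℕ}
    (h : i + 1 < w.length) : EdgesAdj (w[i]'(by omega)) (w[i+1]'h) := by
  have := List.isChain_iff_getElem.mp hc i (by omega)
  simpa using this

private lemma aux_opp {A B : Finset (Sym2 V)}
    (hA : ∀ e ∈ A, ∀ f ∈ A, ¬ EdgesAdj e f) (hB : ∀ e ∈ B, ∀ f ∈ B, ¬ EdgesAdj e f)
    {x y : Sym2 V} (hx : x ∈ A ∨ x ∈ B) (hy : y ∈ A ∨ y ∈ B) (hadj : EdgesAdj x y) :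
    (x ∈ A → y ∈ B) ∧ (x ∈ B → y ∈ A) := by
  constructor
  · intro h; rcases hy with h' | h'
    · exact absurd hadj (hA _ h _ h')
    · exact h'
  · intro h; rcases hy with h' | h'
    · exact h'
    · exact absurd hadj (hB _ h _ h')

private lemma aux_three' {A B : Finset (Sym2 V)}
    (hA : ∀ e ∈ A, ∀ f ∈ A, ¬ EdgesAdj e f) (hB : ∀ e ∈ B, ∀ f ∈ B, ¬ EdgesAdj e f)
    {e n1 n2 n3 : Sym2 V} (he : e ∈ A ∨ e ∈ B)
    (h1 : n1 ∈ A ∨ n1 ∈ B) (h2 : n2 ∈ A ∨ n2 ∈ B) (h3 : n3 ∈ A ∨ n3 ∈ B)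
    (a1 : EdgesAdj e n1) (a2 : EdgesAdj e n2) (a3 : EdgesAdj e n3)
    (d12 : n1 ≠ n2) (d13 : n1 ≠ n3) (d23 : n2 ≠ n3) : False := by
  rcases he with he | he
  · exact aux_three hB ((aux_opp hA hB (Or.inl he) h1 a1).1 he)
      ((aux_opp hA hB (Or.inl he) h2 a2).1 he) ((aux_opp hA hB (Or.inl he) h3 a3).1 he)
      a1 a2 a3 d12 d13 d23
  · exact aux_three hA ((aux_opp hA hB (Or.inr he) h1 a1).2 he)
      ((aux_opp hA hB (Or.inr he) h2 a2).2 he) ((aux_opp hA hB (Or.inr he) h3 a3).2 he)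
      a1 a2 a3 d12 d13 d23

private lemma aux_alt {A B : Finset (Sym2 V)}
    (hA : ∀ e ∈ A, ∀ f ∈ A, ¬ EdgesAdj e f) (hB : ∀ e ∈ B, ∀ f ∈ B, ¬ EdgesAdj e f)
    {w : List (Sym2 V)} (hw : AuxPW A B w) (hlen : 0 < w.length) (h0 : w[0]'hlen ∈ A) :
    ∀ i, ∀ h : i < w.length, ((i % 2 = 0 → w[i]'h ∈ A) ∧ (i % 2 = 1 → w[i]'h ∈ B)) := by
  obtain ⟨-, hpool, hch⟩ := hw
  intro i
  induction i with
  | zero => intro h; exact ⟨fun _ => h0, fun hc => by omega⟩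
  | succ i ih =>
    intro h
    have hi : i < w.length := by omega
    have hadj := aux_chain_adj hch (i := i) h
    have hopp := aux_opp hA hB (hpool _ (List.getElem_mem hi)) (hpool _ (List.getElem_mem h)) hadj
    obtain ⟨pA, pB⟩ := ih hi
    constructor
    · intro hp; exact hopp.2 (pB (by omega))
    · intro hp; exact hopp.1 (pA (by omega))

private lemma aux_ne {w : List (Sym2 V)} (hnd : w.Nodup) {x y : ℕ} (hx : x < w.length)
    (hy : y < w.length) (h : x ≠ y) : w[x]'hx ≠ w[y]'hy :=
  fun hc => h (hnd.getElem_inj_iff.mp hc)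

private lemma aux_adj_index {A B : Finset (Sym2 V)}
    (hA : ∀ e ∈ A, ∀ f ∈ A, ¬ EdgesAdj e f) (hB : ∀ e ∈ B, ∀ f ∈ B, ¬ EdgesAdj e f)
    {w : List (Sym2 V)} (hw : AuxPW A B w) {i j : ℕ} (hij : i < j) (hj : j < w.length)
    (hadj : EdgesAdj (w[i]'(lt_trans hij hj)) (w[j]'hj)) :
    j = i + 1 ∨ (i = 0 ∧ j = w.length - 1) := by
  obtain ⟨hnd, hpool, hch⟩ := hw
  by_contra hcon
  push_neg at hcon
  obtain ⟨hne1, hcor⟩ := hcon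
  have hij2 : i + 1 < j := by omega
  rcases Nat.eq_zero_or_pos i with rfl | hipos
  · -- i = 0, j < len - 1
    have hjlt : j + 1 < w.length := by
      rcases Nat.lt_or_ge (j+1) w.length with h | h
      · exact h
      · exact absurd (by omega : j = w.length - 1) (hcor rfl)
    obtain ⟨j', rfl⟩ : ∃ j', j = j' + 1 := ⟨j - 1, by omega⟩
    have c1 := aux_adj_symm (aux_chain_adj hch (i := j') (by omega))
    have c2 := aux_chain_adj hch (i := j'+1) hjlt
    refine aux_three' hA hB (hpool _ (List.getElem_mem hj))
      (hpool _ (List.getElem_mem (by omega))) (hpool _ (List.getElem_mem hjlt))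
      (hpool _ (List.getElem_mem (by omega))) c1 c2 (aux_adj_symm hadj)
      (aux_ne hnd _ _ (by omega)) (aux_ne hnd _ _ (by omega)) (aux_ne hnd _ _ (by omega))
  · obtain ⟨i', rfl⟩ : ∃ i', i = i' + 1 := ⟨i - 1, by omega⟩
    have c1 := aux_adj_symm (aux_chain_adj hch (i := i') (by omega))
    have c2 := aux_chain_adj hch (i := i'+1) (by omega)
    refine aux_three' hA hB (hpool _ (List.getElem_mem (by omega)))
      (hpool _ (List.getElem_mem (by omega))) (hpool _ (List.getElem_mem (by omega)))
      (hpool _ (List.getElem_mem hj)) c1 c2 hadj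
      (aux_ne hnd _ _ (by omega)) (aux_ne hnd _ _ (by omega)) (aux_ne hnd _ _ (by omega))


private lemma aux_exists_walk {A B : Finset (Sym2 V)}
    (hA : ∀ e ∈ A, ∀ f ∈ A, ¬ EdgesAdj e f) (hB : ∀ e ∈ B, ∀ f ∈ B, ¬ EdgesAdj e f)
    {a : Sym2 V} (ha : a ∈ A ∨ a ∈ B) :
    ∃ w, AuxPW A B w ∧ a ∈ w ∧ AuxClosed A B w := by
  classical
  set S : Set ℕ := {n | ∃ w : List (Sym2 V), AuxPW A B w ∧ a ∈ w ∧ w.length = n} with hS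
  have hone : (1 : ℕ) ∈ S := ⟨[a], ⟨by simp, by intro x hx; rw [List.mem_singleton] at hx; subst hx; exact ha, List.isChain_singleton a⟩, by simp, rfl⟩
  have hne : S.Nonempty := ⟨1, hone⟩
  have hbdd : BddAbove S := by
    refine ⟨(A ∪ B).card, ?_⟩
    rintro n ⟨w, ⟨hnd, hpool, -⟩, -, rfl⟩
    calc w.length = w.toFinset.card := (List.toFinset_card_of_nodup hnd).symm
      _ ≤ (A ∪ B).card := Finset.card_le_card (fun x hx => by
          rcases hpool x (List.mem_toFinset.mp hx) with h | h <;>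
            simp [Finset.mem_union, h])
  obtain ⟨w, hw, haw, hlen⟩ := Nat.sSup_mem hne hbdd
  refine ⟨w, hw, haw, ?_⟩
  intro e he x hxw hadj
  by_contra hew
  obtain ⟨i, hi, rfl⟩ := List.getElem_of_mem hxw
  obtain ⟨hnd, hpool, hch⟩ := hw
  rcases Nat.lt_or_ge (i+1) w.length with hint | hend
  · rcases Nat.eq_zero_or_pos i with rfl | hipos
    · -- prepend e
      have hP : AuxPW A B (e :: w) := by
        refine ⟨List.nodup_cons.mpr ⟨hew, hnd⟩, ?_, ?_⟩
        · intro x hx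
          rcases List.mem_cons.mp hx with rfl | hx
          · exact he
          · exact hpool x hx
        · refine List.isChain_cons.mpr ?_
          refine ⟨?_, hch⟩
          intro y hy
          rw [List.head?_eq_getElem?, List.getElem?_eq_getElem hi] at hy
          simp only [Option.mem_some_iff] at hy
          subst hy
          exact aux_adj_symm hadj
      have : (e :: w).length ≤ sSup S := le_csSup hbdd ⟨e :: w, hP, List.mem_cons_of_mem e haw, rfl⟩
      simp only [List.length_cons] at this
      omega
    · -- interior
      obtain ⟨i', rfl⟩ : ∃ i', i = i' + 1 := ⟨i - 1, by omega⟩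
      have c1 := aux_adj_symm (aux_chain_adj hch (i := i') (by omega))
      have c2 := aux_chain_adj hch (i := i'+1) hint
      refine aux_three' hA hB (hpool _ (List.getElem_mem hi))
        (hpool _ (List.getElem_mem (by omega))) (hpool _ (List.getElem_mem hint))
        he c1 c2 hadj
        (aux_ne hnd _ _ (by omega)) ?_ ?_
      · exact fun hc => hew (hc ▸ List.getElem_mem (by omega))
      · exact fun hc => hew (hc ▸ List.getElem_mem hint)
  · -- append e
    have hiend : i = w.length - 1 := by omega
    have hP : AuxPW A B (w ++ [e]) := by
      refine ⟨List.Nodup.append hnd (List.nodup_singleton e) ?_, ?_, ?_⟩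
      · intro x hxw' hxe
        rw [List.mem_singleton] at hxe
        subst hxe
        exact hew hxw'
      · intro x hx
        rcases List.mem_append.mp hx with hx | hx
        · exact hpool x hx
        · rw [List.mem_singleton] at hx; subst hx; exact he
      · refine List.isChain_append.mpr ?_
        refine ⟨hch, List.isChain_singleton e, ?_⟩
        intro x hx y hy
        rw [List.getLast?_eq_getElem?, List.getElem?_eq_getElem (by omega : w.length - 1 < w.length)] at hx
        simp only [Option.mem_some_iff] at hx
        subst hx
        simp only [List.head?_cons, Option.mem_some_iff] at hy
        subst hy
        have hgl : w[w.length-1]'(by omega) = w[i]'hi := aux_getElem_congr _ _ hiend.symm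
        rw [hgl]
        exact hadj
    have : (w ++ [e]).length ≤ sSup S :=
      le_csSup hbdd ⟨w ++ [e], hP, List.mem_append.mpr (Or.inl haw), rfl⟩
    simp only [List.length_append, List.length_singleton] at this
    omega
private lemma aux_split {A B : Finset (Sym2 V)}
    (hA : ∀ e ∈ A, ∀ f ∈ A, ¬ EdgesAdj e f) (hB : ∀ e ∈ B, ∀ f ∈ B, ¬ EdgesAdj e f)
    (hd : ∀ e, e ∈ A → e ∈ B → False)
    {w : List (Sym2 V)} (hw : AuxPW A B w) (hlen : 0 < w.length) (h0 : w[0]'hlen ∈ A) :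
    ∃ C0 C1 : List (Sym2 V),
      C0.length = (w.length + 1) / 2 ∧ C1.length = w.length / 2 ∧
      C0.Nodup ∧ C1.Nodup ∧
      (∀ e, e ∈ C0 ↔ e ∈ w ∧ e ∈ A) ∧ (∀ e, e ∈ C1 ↔ e ∈ w ∧ e ∈ B) ∧
      (∀ p, p < (w.length + 1) / 2 → C0[p]? = w[2 * p]?) ∧
      (∀ q, q < w.length / 2 → C1[q]? = w[2 * q + 1]?) := by
  have halt := aux_alt hA hB hw hlen h0
  have hnd := hw.1
  refine ⟨List.ofFn (fun i : Fin ((w.length + 1) / 2) => w[2 * i.1]'(by have := i.isLt; omega)),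
          List.ofFn (fun i : Fin (w.length / 2) => w[2 * i.1 + 1]'(by have := i.isLt; omega)),
          List.length_ofFn, List.length_ofFn, ?_, ?_, ?_, ?_, ?_, ?_⟩
  · rw [List.nodup_ofFn]
    intro i j hij
    have := hnd.getElem_inj_iff.mp hij
    exact Fin.ext (by omega)
  · rw [List.nodup_ofFn]
    intro i j hij
    have := hnd.getElem_inj_iff.mp hij
    exact Fin.ext (by omega)
  · intro e
    constructor
    · intro he
      obtain ⟨i, rfl⟩ := Set.mem_range.mp ((List.mem_ofFn' _ _).mp he)
      exact ⟨List.getElem_mem _, (halt (2 * i.1) (by have := i.isLt; omega)).1 (by omega)⟩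
    · rintro ⟨hew, heA⟩
      obtain ⟨i, hi, rfl⟩ := List.getElem_of_mem hew
      have hieven : i % 2 = 0 := by
        rcases Nat.mod_two_eq_zero_or_one i with h | h
        · exact h
        · exact absurd ((halt i hi).2 h) (fun hc => hd _ heA hc)
      refine (List.mem_ofFn' _ _).mpr (Set.mem_range.mpr ⟨⟨i / 2, by omega⟩, ?_⟩)
      exact aux_getElem_congr _ _ (show 2 * (i / 2) = i by omega)
  · intro e
    constructor
    · intro he
      obtain ⟨i, rfl⟩ := Set.mem_range.mp ((List.mem_ofFn' _ _).mp he)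
      exact ⟨List.getElem_mem _, (halt (2 * i.1 + 1) (by have := i.isLt; omega)).2 (by omega)⟩
    · rintro ⟨hew, heB⟩
      obtain ⟨i, hi, rfl⟩ := List.getElem_of_mem hew
      have hiodd : i % 2 = 1 := by
        rcases Nat.mod_two_eq_zero_or_one i with h | h
        · exact absurd ((halt i hi).1 h) (fun hc => hd _ hc heB)
        · exact h
      refine (List.mem_ofFn' _ _).mpr (Set.mem_range.mpr ⟨⟨i / 2, by omega⟩, ?_⟩)
      exact aux_getElem_congr _ _ (show 2 * (i / 2) + 1 = i by omega)
  · intro p hp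
    rw [List.getElem?_ofFn, List.getElem?_eq_getElem (show 2 * p < w.length by omega)]
    simp only [dif_pos hp]
  · intro q hq
    rw [List.getElem?_ofFn, List.getElem?_eq_getElem (show 2 * q + 1 < w.length by omega)]
    simp only [dif_pos hq]

private def auxAinv (k p : ℕ) : ℕ := if p = 0 then 0 else if p % 2 = 1 then (p + 1) / 2 else k - p / 2
private def auxBinv (k q : ℕ) : ℕ := if q % 2 = 0 then q / 2 else k - (q + 1) / 2
private def auxAfwd (k i : ℕ) : ℕ := if i = 0 then 0 else if 2 * i ≤ k then 2 * i - 1 else 2 * (k - i)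
private def auxBfwd (k i : ℕ) : ℕ := if 2 * i + 1 ≤ k then 2 * i else 2 * (k - i) - 1

private lemma auxAinv_lt {k p : ℕ} (h : p < k) : auxAinv k p < k := by
  unfold auxAinv; split_ifs <;> omega
private lemma auxBinv_lt {k q : ℕ} (h : q < k) : auxBinv k q < k := by
  unfold auxBinv; split_ifs <;> omega
private lemma auxAfwd_lt {k i : ℕ} (h : i < k) : auxAfwd k i < k := by
  unfold auxAfwd; split_ifs <;> omega
private lemma auxBfwd_lt {k i : ℕ} (h : i < k) : auxBfwd k i < k := by
  unfold auxBfwd; split_ifs <;> omega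
private lemma auxAinv_afwd {k i : ℕ} (h : i < k) : auxAinv k (auxAfwd k i) = i := by
  unfold auxAinv auxAfwd; split_ifs <;> omega
private lemma auxBinv_bfwd {k i : ℕ} (h : i < k) : auxBinv k (auxBfwd k i) = i := by
  unfold auxBinv auxBfwd; split_ifs <;> omega
private lemma auxAinv_inj {k p p' : ℕ} (h : p < k) (h' : p' < k)
    (he : auxAinv k p = auxAinv k p') : p = p' := by
  unfold auxAinv at he; split_ifs at he <;> omega
private lemma auxBinv_inj {k q q' : ℕ} (h : q < k) (h' : q' < k)
    (he : auxBinv k q = auxBinv k q') : q = q' := by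
  unfold auxBinv at he; split_ifs at he <;> omega
private lemma aux_zig_key {k p q : ℕ} (hp : p < k) (hq : q < k)
    (h : auxAinv k p = auxBinv k q ∨ auxAinv k p = auxBinv k q + 1 ∨
      (auxAinv k p = 0 ∧ auxBinv k q = k - 1)) :
    p ≤ q + 1 ∧ q ≤ p + 1 := by
  unfold auxAinv auxBinv at h
  rcases h with h | h | ⟨h1, h2⟩
  · split_ifs at h <;> omega
  · split_ifs at h <;> omega
  · split_ifs at h1 h2 <;> omega
private lemma aux_split_cycle {A B : Finset (Sym2 V)}
    (hA : ∀ e ∈ A, ∀ f ∈ A, ¬ EdgesAdj e f) (hB : ∀ e ∈ B, ∀ f ∈ B, ¬ EdgesAdj e f)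
    (hd : ∀ e, e ∈ A → e ∈ B → False)
    {w : List (Sym2 V)} (hw : AuxPW A B w) (hlen : 0 < w.length) (hev : w.length % 2 = 0)
    (h0 : w[0]'hlen ∈ A) :
    ∃ C0 C1 : List (Sym2 V),
      C0.length = w.length / 2 ∧ C1.length = w.length / 2 ∧
      C0.Nodup ∧ C1.Nodup ∧
      (∀ e, e ∈ C0 ↔ e ∈ w ∧ e ∈ A) ∧ (∀ e, e ∈ C1 ↔ e ∈ w ∧ e ∈ B) ∧
      (∀ p, p < w.length / 2 → C0[p]? = w[2 * auxAinv (w.length / 2) p]?) ∧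
      (∀ q, q < w.length / 2 → C1[q]? = w[2 * auxBinv (w.length / 2) q + 1]?) := by
  have halt := aux_alt hA hB hw hlen h0
  have hnd := hw.1
  set k := w.length / 2 with hk
  refine ⟨List.ofFn (fun i : Fin k => w[2 * auxAinv k i.1]'(by
            have h1 := i.isLt; have h2 := auxAinv_lt (k := k) h1; omega)),
          List.ofFn (fun i : Fin k => w[2 * auxBinv k i.1 + 1]'(by
            have h1 := i.isLt; have h2 := auxBinv_lt (k := k) h1; omega)),
          List.length_ofFn, List.length_ofFn, ?_, ?_, ?_, ?_, ?_, ?_⟩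
  · rw [List.nodup_ofFn]
    intro i j hij
    have := hnd.getElem_inj_iff.mp hij
    exact Fin.ext (auxAinv_inj i.isLt j.isLt (by omega))
  · rw [List.nodup_ofFn]
    intro i j hij
    have := hnd.getElem_inj_iff.mp hij
    exact Fin.ext (auxBinv_inj i.isLt j.isLt (by omega))
  · intro e
    constructor
    · intro he
      obtain ⟨i, rfl⟩ := Set.mem_range.mp ((List.mem_ofFn' _ _).mp he)
      refine ⟨List.getElem_mem _, (halt (2 * auxAinv k i.1) ?_).1 (by omega)⟩
      have h1 := i.isLt; have h2 := auxAinv_lt (k := k) h1; omega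
    · rintro ⟨hew, heA⟩
      obtain ⟨i, hi, rfl⟩ := List.getElem_of_mem hew
      have hieven : i % 2 = 0 := by
        rcases Nat.mod_two_eq_zero_or_one i with h | h
        · exact h
        · exact absurd ((halt i hi).2 h) (fun hc => hd _ heA hc)
      have hhalf : i / 2 < k := by omega
      refine (List.mem_ofFn' _ _).mpr (Set.mem_range.mpr ⟨⟨auxAfwd k (i / 2), auxAfwd_lt hhalf⟩, ?_⟩)
      refine aux_getElem_congr _ _ ?_
      show 2 * auxAinv k (auxAfwd k (i / 2)) = i
      rw [auxAinv_afwd hhalf]; omega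
  · intro e
    constructor
    · intro he
      obtain ⟨i, rfl⟩ := Set.mem_range.mp ((List.mem_ofFn' _ _).mp he)
      refine ⟨List.getElem_mem _, (halt (2 * auxBinv k i.1 + 1) ?_).2 (by omega)⟩
      have h1 := i.isLt; have h2 := auxBinv_lt (k := k) h1; omega
    · rintro ⟨hew, heB⟩
      obtain ⟨i, hi, rfl⟩ := List.getElem_of_mem hew
      have hiodd : i % 2 = 1 := by
        rcases Nat.mod_two_eq_zero_or_one i with h | h
        · exact absurd ((halt i hi).1 h) (fun hc => hd _ hc heB)
        · exact h
      have hhalf : i / 2 < k := by omega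
      refine (List.mem_ofFn' _ _).mpr (Set.mem_range.mpr ⟨⟨auxBfwd k (i / 2), auxBfwd_lt hhalf⟩, ?_⟩)
      refine aux_getElem_congr _ _ ?_
      show 2 * auxBinv k (auxBfwd k (i / 2)) + 1 = i
      rw [auxBinv_bfwd hhalf]; omega
  · intro p hp
    have h2 := auxAinv_lt (k := k) hp
    rw [List.getElem?_ofFn, List.getElem?_eq_getElem (show 2 * auxAinv k p < w.length by omega)]
    simp only [dif_pos hp]
  · intro q hq
    have h2 := auxBinv_lt (k := k) hq
    rw [List.getElem?_ofFn, List.getElem?_eq_getElem (show 2 * auxBinv k q + 1 < w.length by omega)]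
    simp only [dif_pos hq]

private lemma aux_relP {A B : Finset (Sym2 V)}
    (hA : ∀ e ∈ A, ∀ f ∈ A, ¬ EdgesAdj e f) (hB : ∀ e ∈ B, ∀ f ∈ B, ¬ EdgesAdj e f)
    {w C0 C1 : List (Sym2 V)} (hw : AuxPW A B w)
    (hC0 : C0.length = (w.length + 1) / 2) (hC1 : C1.length = w.length / 2)
    (hg0 : ∀ p, p < (w.length + 1) / 2 → C0[p]? = w[2 * p]?)
    (hg1 : ∀ q, q < w.length / 2 → C1[q]? = w[2 * q + 1]?)
    (hnw : w.length % 2 = 1 ∨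
      ∀ (hl : 0 < w.length) (hl2 : w.length - 1 < w.length),
        ¬ EdgesAdj (w[0]'hl) (w[w.length - 1]'hl2)) :
    ∀ p q e f, C0[p]? = some e → C1[q]? = some f → EdgesAdj e f → p = q ∨ p = q + 1 := by
  intro p q e f he hf hadj
  have hp : p < C0.length := (List.getElem?_eq_some_iff.mp he).1
  have hq : q < C1.length := (List.getElem?_eq_some_iff.mp hf).1
  rw [hC0] at hp; rw [hC1] at hq
  rw [hg0 p hp] at he; rw [hg1 q hq] at hf
  obtain ⟨hx, rfl⟩ := List.getElem?_eq_some_iff.mp he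
  obtain ⟨hy, rfl⟩ := List.getElem?_eq_some_iff.mp hf
  rcases Nat.lt_or_ge (2 * p) (2 * q + 1) with hlt | hge
  · rcases aux_adj_index hA hB hw hlt hy hadj with h | ⟨h1, h2⟩
    · left; omega
    · rcases hnw with hodd | hnadj
      · omega
      · exfalso
        have e1 : w[2 * p]'hx = w[0]'(by omega) := aux_getElem_congr _ _ h1
        have e2 : w[2 * q + 1]'hy = w[w.length - 1]'(by omega) := aux_getElem_congr _ _ h2
        rw [e1, e2] at hadj
        exact hnadj _ _ hadj
  · have hlt' : 2 * q + 1 < 2 * p := by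
      rcases Nat.lt_or_ge (2 * q + 1) (2 * p) with h | h
      · exact h
      · omega
    rcases aux_adj_index hA hB hw hlt' hx (aux_adj_symm hadj) with h | ⟨h1, h2⟩
    · right; omega
    · omega

private lemma aux_relC {A B : Finset (Sym2 V)}
    (hA : ∀ e ∈ A, ∀ f ∈ A, ¬ EdgesAdj e f) (hB : ∀ e ∈ B, ∀ f ∈ B, ¬ EdgesAdj e f)
    {w C0 C1 : List (Sym2 V)} (hw : AuxPW A B w) (hev : w.length % 2 = 0)
    (hC0 : C0.length = w.length / 2) (hC1 : C1.length = w.length / 2)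
    (hg0 : ∀ p, p < w.length / 2 → C0[p]? = w[2 * auxAinv (w.length / 2) p]?)
    (hg1 : ∀ q, q < w.length / 2 → C1[q]? = w[2 * auxBinv (w.length / 2) q + 1]?) :
    AuxAligned C0 C1 := by
  intro p q e f he hf hadj
  set k := w.length / 2 with hk
  have hp : p < C0.length := (List.getElem?_eq_some_iff.mp he).1
  have hq : q < C1.length := (List.getElem?_eq_some_iff.mp hf).1
  rw [hC0] at hp; rw [hC1] at hq
  rw [hg0 p hp] at he; rw [hg1 q hq] at hf
  obtain ⟨hx, rfl⟩ := List.getElem?_eq_some_iff.mp he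
  obtain ⟨hy, rfl⟩ := List.getElem?_eq_some_iff.mp hf
  have hak := auxAinv_lt (k := k) hp
  have hbk := auxBinv_lt (k := k) hq
  refine aux_zig_key hp hq ?_
  rcases Nat.lt_or_ge (2 * auxAinv k p) (2 * auxBinv k q + 1) with hlt | hge
  · rcases aux_adj_index hA hB hw hlt hy hadj with h | ⟨h1, h2⟩
    · left; omega
    · right; right; constructor <;> omega
  · have hlt' : 2 * auxBinv k q + 1 < 2 * auxAinv k p := by omega
    rcases aux_adj_index hA hB hw hlt' hx (aux_adj_symm hadj) with h | ⟨h1, h2⟩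
    · right; left; omega
    · omega

private lemma aux_pair {C0 C1 C0' C1' : List (Sym2 V)}
    (hr : ∀ p q e f, C0[p]? = some e → C1[q]? = some f → EdgesAdj e f → p = q ∨ p = q + 1)
    (hr' : ∀ p q e f, C0'[p]? = some e → C1'[q]? = some f → EdgesAdj e f → p = q ∨ q = p + 1)
    (hl : C0.length = C1.length + 1) (hl' : C1'.length = C0'.length + 1)
    (hc1 : ∀ e ∈ C0, ∀ f ∈ C1', ¬ EdgesAdj e f)
    (hc2 : ∀ e ∈ C0', ∀ f ∈ C1, ¬ EdgesAdj e f) :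
    AuxAligned (C0 ++ C0') (C1 ++ C1') := by
  intro p q e f he hf hadj
  rw [List.getElem?_append] at he hf
  split_ifs at he hf with h1 h2 h2
  · rcases hr p q e f he hf hadj with h | h <;> omega
  · exact absurd hadj (hc1 e (by obtain ⟨hh, rfl⟩ := List.getElem?_eq_some_iff.mp he; exact List.getElem_mem hh)
      f (by obtain ⟨hh, rfl⟩ := List.getElem?_eq_some_iff.mp hf; exact List.getElem_mem hh))
  · exact absurd hadj (fun hadj' => hc2 e
      (by obtain ⟨hh, rfl⟩ := List.getElem?_eq_some_iff.mp he; exact List.getElem_mem hh)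
      f (by obtain ⟨hh, rfl⟩ := List.getElem?_eq_some_iff.mp hf; exact List.getElem_mem hh) hadj')
  · rcases hr' _ _ e f he hf hadj with h | h <;> omega

private lemma aux_compose {C0 C1 L0 L1 : List (Sym2 V)} (hC : AuxAligned C0 C1)
    (hL : AuxAligned L0 L1) (hlen : C0.length = C1.length)
    (hc1 : ∀ e ∈ C0, ∀ f ∈ L1, ¬ EdgesAdj e f)
    (hc2 : ∀ e ∈ L0, ∀ f ∈ C1, ¬ EdgesAdj e f) :
    AuxAligned (C0 ++ L0) (C1 ++ L1) := by
  intro p q e f he hf hadj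
  rw [List.getElem?_append] at he hf
  split_ifs at he hf with h1 h2 h2
  · exact hC p q e f he hf hadj
  · exact absurd hadj (hc1 e (by obtain ⟨hh, rfl⟩ := List.getElem?_eq_some_iff.mp he; exact List.getElem_mem hh)
      f (by obtain ⟨hh, rfl⟩ := List.getElem?_eq_some_iff.mp hf; exact List.getElem_mem hh))
  · exact absurd hadj (fun hadj' => hc2 e
      (by obtain ⟨hh, rfl⟩ := List.getElem?_eq_some_iff.mp he; exact List.getElem_mem hh)
      f (by obtain ⟨hh, rfl⟩ := List.getElem?_eq_some_iff.mp hf; exact List.getElem_mem hh) hadj')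
  · have := hL _ _ e f he hf hadj
    omega

private lemma aux_find : ∀ (m : ℕ) (A B : Finset (Sym2 V)),
    (∀ e ∈ A, ∀ f ∈ A, ¬ EdgesAdj e f) → (∀ e ∈ B, ∀ f ∈ B, ¬ EdgesAdj e f) →
    (∀ e, e ∈ A → e ∈ B → False) → B.card ≤ m → A.card < B.card →
    ∃ w, AuxPW A B w ∧ AuxClosed A B w ∧ w.length % 2 = 1 ∧
      ∃ h : 0 < w.length, w[0]'h ∈ B := by
  intro m
  induction m using Nat.strong_induction_on with
  | _ m ih =>
    intro A B hA hB hd hm hlt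
    classical
    obtain ⟨b, hb⟩ := Finset.card_pos.mp (by omega : 0 < B.card)
    obtain ⟨w, hw, hbw, hcl⟩ := aux_exists_walk hA hB (Or.inr hb)
    have hwne : 0 < w.length := List.length_pos_iff.mpr (List.ne_nil_of_mem hbw)
    by_cases hsucc : w.length % 2 = 1 ∧ w[0]'hwne ∈ B
    · exact ⟨w, hw, hcl, hsucc.1, hwne, hsucc.2⟩
    · -- get side lists SA SB with |SB| ≤ |SA|
      obtain ⟨SA, SB, hSAnd, hSBnd, hSAmem, hSBmem, hcnt⟩ :
          ∃ SA SB : List (Sym2 V), SA.Nodup ∧ SB.Nodup ∧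
            (∀ e, e ∈ SA ↔ e ∈ w ∧ e ∈ A) ∧ (∀ e, e ∈ SB ↔ e ∈ w ∧ e ∈ B) ∧
            SB.length ≤ SA.length := by
        rcases hw.2.1 _ (List.getElem_mem hwne) with h0 | h0
        · obtain ⟨C0, C1, hl0, hl1, hnd0, hnd1, hm0, hm1, -, -⟩ :=
            aux_split hA hB hd hw hwne h0
          exact ⟨C0, C1, hnd0, hnd1, hm0, hm1, by omega⟩
        · have hevv : w.length % 2 = 0 := by
            rcases Nat.mod_two_eq_zero_or_one w.length with h | h
            · exact h
            · exact absurd ⟨h, h0⟩ hsucc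
          obtain ⟨C0, C1, hl0, hl1, hnd0, hnd1, hm0, hm1, -, -⟩ :=
            aux_split hB hA (fun e h1 h2 => hd e h2 h1) (aux_pw_swap hw) hwne h0
          exact ⟨C1, C0, hnd1, hnd0,
            fun e => (hm1 e).trans (by tauto), fun e => (hm0 e).trans (by tauto), by omega⟩
      have hbSB : b ∈ SB := (hSBmem b).mpr ⟨hbw, hb⟩
      have hSBpos : 0 < SB.length := List.length_pos_iff.mpr (List.ne_nil_of_mem hbSB)
      set A' := A \ SA.toFinset with hA'
      set B' := B \ SB.toFinset with hB'
      have hSAsub : SA.toFinset ⊆ A := fun x hx => ((hSAmem x).mp (List.mem_toFinset.mp hx)).2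
      have hSBsub : SB.toFinset ⊆ B := fun x hx => ((hSBmem x).mp (List.mem_toFinset.mp hx)).2
      have hcardA : A'.card = A.card - SA.length := by
        rw [hA', Finset.card_sdiff_of_subset hSAsub, List.toFinset_card_of_nodup hSAnd]
      have hcardB : B'.card = B.card - SB.length := by
        rw [hB', Finset.card_sdiff_of_subset hSBsub, List.toFinset_card_of_nodup hSBnd]
      have hSAle : SA.length ≤ A.card := by
        rw [← List.toFinset_card_of_nodup hSAnd]; exact Finset.card_le_card hSAsub
      have hSBle : SB.length ≤ B.card := by
        rw [← List.toFinset_card_of_nodup hSBnd]; exact Finset.card_le_card hSBsub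
      obtain ⟨w', hw', hcl', hodd', hw'ne, h0'B⟩ :=
        ih B'.card (by omega) A' B'
          (fun e he f hf => hA e (Finset.mem_sdiff.mp he).1 f (Finset.mem_sdiff.mp hf).1)
          (fun e he f hf => hB e (Finset.mem_sdiff.mp he).1 f (Finset.mem_sdiff.mp hf).1)
          (fun e he hf => hd e (Finset.mem_sdiff.mp he).1 (Finset.mem_sdiff.mp hf).1)
          le_rfl (by omega)
      have hpool' : ∀ x ∈ w', x ∈ A ∨ x ∈ B := by
        intro x hx
        rcases hw'.2.1 x hx with h | h
        · exact Or.inl (Finset.mem_sdiff.mp h).1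
        · exact Or.inr (Finset.mem_sdiff.mp h).1
      have hw'notw : ∀ x ∈ w', x ∉ w := by
        intro x hx hxw
        rcases hw'.2.1 x hx with h | h
        · exact (Finset.mem_sdiff.mp h).2
            (List.mem_toFinset.mpr ((hSAmem x).mpr ⟨hxw, (Finset.mem_sdiff.mp h).1⟩))
        · exact (Finset.mem_sdiff.mp h).2
            (List.mem_toFinset.mpr ((hSBmem x).mpr ⟨hxw, (Finset.mem_sdiff.mp h).1⟩))
      refine ⟨w', ⟨hw'.1, hpool', hw'.2.2⟩, ?_, hodd', hw'ne,
        (Finset.mem_sdiff.mp h0'B).1⟩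
      intro e he x hxw' hadj
      have henw : e ∉ w := by
        intro hew
        exact hw'notw x hxw' (hcl x (hpool' x hxw') e hew (aux_adj_symm hadj))
      have he' : e ∈ A' ∨ e ∈ B' := by
        rcases he with h | h
        · exact Or.inl (Finset.mem_sdiff.mpr ⟨h, fun hc =>
            henw ((hSAmem e).mp (List.mem_toFinset.mp hc)).1⟩)
        · exact Or.inr (Finset.mem_sdiff.mpr ⟨h, fun hc =>
            henw ((hSBmem e).mp (List.mem_toFinset.mp hc)).1⟩)
      exact hcl' e he' x hxw' hadj

private lemma aux_build_chunk {A B : Finset (Sym2 V)}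
    (hA : ∀ e ∈ A, ∀ f ∈ A, ¬ EdgesAdj e f) (hB : ∀ e ∈ B, ∀ f ∈ B, ¬ EdgesAdj e f)
    (hd : ∀ e, e ∈ A → e ∈ B → False) (hc : A.card = B.card)
    {w : List (Sym2 V)} (hw : AuxPW A B w) (hcl : AuxClosed A B w)
    (hwne : 0 < w.length) (h0 : w[0]'hwne ∈ A) :
    ∃ D0 D1 : List (Sym2 V), D0.Nodup ∧ D1.Nodup ∧ (∀ e ∈ D0, e ∈ A) ∧ (∀ e ∈ D1, e ∈ B) ∧
      D0.length = D1.length ∧ 0 < D0.length ∧ AuxAligned D0 D1 ∧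
      (∀ x e, (x ∈ D0 ∨ x ∈ D1) → (e ∈ A ∨ e ∈ B) → EdgesAdj x e → (e ∈ D0 ∨ e ∈ D1)) := by
  classical
  rcases Nat.mod_two_eq_zero_or_one w.length with hev | hodd
  · by_cases hcyc : EdgesAdj (w[0]'hwne) (w[w.length - 1]'(by omega))
    · -- cycle chunk
      obtain ⟨C0, C1, hl0, hl1, hnd0, hnd1, hm0, hm1, hg0, hg1⟩ :=
        aux_split_cycle hA hB hd hw hwne hev h0
      have hal := aux_relC hA hB hw hev hl0 hl1 hg0 hg1
      refine ⟨C0, C1, hnd0, hnd1, fun e he => ((hm0 e).mp he).2,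
        fun e he => ((hm1 e).mp he).2, by omega, by omega, hal, ?_⟩
      intro x e hx he hadj
      have hxw : x ∈ w := by
        rcases hx with h | h
        · exact ((hm0 x).mp h).1
        · exact ((hm1 x).mp h).1
      have hew := hcl e he x hxw hadj
      rcases he with h | h
      · exact Or.inl ((hm0 e).mpr ⟨hew, h⟩)
      · exact Or.inr ((hm1 e).mpr ⟨hew, h⟩)
    · -- balanced path chunk
      obtain ⟨C0, C1, hl0, hl1, hnd0, hnd1, hm0, hm1, hg0, hg1⟩ :=
        aux_split hA hB hd hw hwne h0
      have hrel := aux_relP hA hB hw hl0 hl1 hg0 hg1 (Or.inr (fun hl hl2 => hcyc))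
      have hal : AuxAligned C0 C1 := fun p q e f he hf hadj => by
        rcases hrel p q e f he hf hadj with h | h <;> omega
      refine ⟨C0, C1, hnd0, hnd1, fun e he => ((hm0 e).mp he).2,
        fun e he => ((hm1 e).mp he).2, by omega, by omega, hal, ?_⟩
      intro x e hx he hadj
      have hxw : x ∈ w := by
        rcases hx with h | h
        · exact ((hm0 x).mp h).1
        · exact ((hm1 x).mp h).1
      have hew := hcl e he x hxw hadj
      rcases he with h | h
      · exact Or.inl ((hm0 e).mpr ⟨hew, h⟩)
      · exact Or.inr ((hm1 e).mpr ⟨hew, h⟩)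
  · -- A-heavy walk: pair it with a B-heavy walk
    obtain ⟨C0, C1, hl0, hl1, hnd0, hnd1, hm0, hm1, hg0, hg1⟩ :=
      aux_split hA hB hd hw hwne h0
    have hr := aux_relP hA hB hw hl0 hl1 hg0 hg1 (Or.inl hodd)
    set A1 := A \ C0.toFinset with hA1def
    set B1 := B \ C1.toFinset with hB1def
    have hA1m : ∀ e ∈ A1, ∀ f ∈ A1, ¬ EdgesAdj e f :=
      fun e he f hf => hA e (Finset.mem_sdiff.mp he).1 f (Finset.mem_sdiff.mp hf).1
    have hB1m : ∀ e ∈ B1, ∀ f ∈ B1, ¬ EdgesAdj e f :=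
      fun e he f hf => hB e (Finset.mem_sdiff.mp he).1 f (Finset.mem_sdiff.mp hf).1
    have hd1 : ∀ e, e ∈ A1 → e ∈ B1 → False :=
      fun e he hf => hd e (Finset.mem_sdiff.mp he).1 (Finset.mem_sdiff.mp hf).1
    have hsub0 : C0.toFinset ⊆ A := fun x hx => ((hm0 x).mp (List.mem_toFinset.mp hx)).2
    have hsub1 : C1.toFinset ⊆ B := fun x hx => ((hm1 x).mp (List.mem_toFinset.mp hx)).2
    have hca : A1.card = A.card - C0.length := by
      rw [hA1def, Finset.card_sdiff_of_subset hsub0, List.toFinset_card_of_nodup hnd0]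
    have hcb : B1.card = B.card - C1.length := by
      rw [hB1def, Finset.card_sdiff_of_subset hsub1, List.toFinset_card_of_nodup hnd1]
    have hle0 : C0.length ≤ A.card := by
      rw [← List.toFinset_card_of_nodup hnd0]; exact Finset.card_le_card hsub0
    have hle1 : C1.length ≤ B.card := by
      rw [← List.toFinset_card_of_nodup hnd1]; exact Finset.card_le_card hsub1
    have hlt : A1.card < B1.card := by omega
    obtain ⟨w', hw', hcl', hodd', hw'ne, h0'⟩ :=
      aux_find B1.card A1 B1 hA1m hB1m hd1 le_rfl hlt
    obtain ⟨E0, E1, hl0', hl1', hnd0', hnd1', hm0', hm1', hg0', hg1'⟩ :=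
      aux_split hB1m hA1m (fun e h1 h2 => hd1 e h2 h1) (aux_pw_swap hw') hw'ne h0'
    have hr'raw := aux_relP hB1m hA1m (aux_pw_swap hw') hl0' hl1' hg0' hg1' (Or.inl hodd')
    have hr' : ∀ p q e f, E1[p]? = some e → E0[q]? = some f → EdgesAdj e f →
        p = q ∨ q = p + 1 := by
      intro p q e f h1 h2 had
      rcases hr'raw q p f e h2 h1 (aux_adj_symm had) with h | h
      · exact Or.inl h.symm
      · exact Or.inr h
    have hc1 : ∀ e ∈ C0, ∀ f ∈ E0, ¬ EdgesAdj e f := by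
      intro e heC0 f hfE0 hadj
      obtain ⟨hfw', hfB1⟩ := (hm0' f).mp hfE0
      have hfw := hcl f (Or.inr (Finset.mem_sdiff.mp hfB1).1) e ((hm0 e).mp heC0).1 hadj
      exact (Finset.mem_sdiff.mp hfB1).2
        (List.mem_toFinset.mpr ((hm1 f).mpr ⟨hfw, (Finset.mem_sdiff.mp hfB1).1⟩))
    have hc2 : ∀ e ∈ E1, ∀ f ∈ C1, ¬ EdgesAdj e f := by
      intro e heE1 f hfC1 hadj
      obtain ⟨hew', heA1⟩ := (hm1' e).mp heE1
      have hew := hcl e (Or.inl (Finset.mem_sdiff.mp heA1).1) f ((hm1 f).mp hfC1).1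
        (aux_adj_symm hadj)
      exact (Finset.mem_sdiff.mp heA1).2
        (List.mem_toFinset.mpr ((hm0 e).mpr ⟨hew, (Finset.mem_sdiff.mp heA1).1⟩))
    have hal := aux_pair hr hr' (by omega) (by omega) hc1 hc2
    refine ⟨C0 ++ E1, C1 ++ E0, ?_, ?_, ?_, ?_, ?_, ?_, hal, ?_⟩
    · refine List.Nodup.append hnd0 hnd1' ?_
      intro x hx hx'
      exact (Finset.mem_sdiff.mp ((hm1' x).mp hx').2).2 (List.mem_toFinset.mpr hx)
    · refine List.Nodup.append hnd1 hnd0' ?_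
      intro x hx hx'
      exact (Finset.mem_sdiff.mp ((hm0' x).mp hx').2).2 (List.mem_toFinset.mpr hx)
    · intro e he
      rcases List.mem_append.mp he with h | h
      · exact ((hm0 e).mp h).2
      · exact (Finset.mem_sdiff.mp ((hm1' e).mp h).2).1
    · intro e he
      rcases List.mem_append.mp he with h | h
      · exact ((hm1 e).mp h).2
      · exact (Finset.mem_sdiff.mp ((hm0' e).mp h).2).1
    · rw [List.length_append, List.length_append]; omega
    · rw [List.length_append]; omega
    · intro x e hx he hadj
      have hx' : x ∈ w ∨ x ∈ w' := by
        rcases hx with h | h <;> rcases List.mem_append.mp h with h' | h'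
        · exact Or.inl ((hm0 x).mp h').1
        · exact Or.inr ((hm1' x).mp h').1
        · exact Or.inl ((hm1 x).mp h').1
        · exact Or.inr ((hm0' x).mp h').1
      rcases hx' with hxw | hxw'
      · have hew := hcl e he x hxw hadj
        rcases he with h | h
        · exact Or.inl (List.mem_append.mpr (Or.inl ((hm0 e).mpr ⟨hew, h⟩)))
        · exact Or.inr (List.mem_append.mpr (Or.inl ((hm1 e).mpr ⟨hew, h⟩)))
      · have hxpool1 := hw'.2.1 x hxw'
        have hxpool : x ∈ A ∨ x ∈ B := by
          rcases hxpool1 with h | h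
          · exact Or.inl (Finset.mem_sdiff.mp h).1
          · exact Or.inr (Finset.mem_sdiff.mp h).1
        have henw : e ∉ w := by
          intro hew
          have hxw2 := hcl x hxpool e hew (aux_adj_symm hadj)
          rcases hxpool1 with h | h
          · exact (Finset.mem_sdiff.mp h).2
              (List.mem_toFinset.mpr ((hm0 x).mpr ⟨hxw2, (Finset.mem_sdiff.mp h).1⟩))
          · exact (Finset.mem_sdiff.mp h).2
              (List.mem_toFinset.mpr ((hm1 x).mpr ⟨hxw2, (Finset.mem_sdiff.mp h).1⟩))
        have he1 : e ∈ A1 ∨ e ∈ B1 := by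
          rcases he with h | h
          · exact Or.inl (Finset.mem_sdiff.mpr ⟨h, fun hcc =>
              henw ((hm0 e).mp (List.mem_toFinset.mp hcc)).1⟩)
          · exact Or.inr (Finset.mem_sdiff.mpr ⟨h, fun hcc =>
              henw ((hm1 e).mp (List.mem_toFinset.mp hcc)).1⟩)
        have hew' := hcl' e he1 x hxw' hadj
        rcases he1 with h | h
        · exact Or.inl (List.mem_append.mpr (Or.inr ((hm1' e).mpr ⟨hew', h⟩)))
        · exact Or.inr (List.mem_append.mpr (Or.inr ((hm0' e).mpr ⟨hew', h⟩)))

private lemma aux_rec : ∀ (n : ℕ) (A B : Finset (Sym2 V)),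
    (∀ e ∈ A, ∀ f ∈ A, ¬ EdgesAdj e f) → (∀ e ∈ B, ∀ f ∈ B, ¬ EdgesAdj e f) →
    (∀ e, e ∈ A → e ∈ B → False) → A.card = n → B.card = n →
    ∃ L0 L1 : List (Sym2 V), L0.Nodup ∧ L1.Nodup ∧ (∀ e, e ∈ L0 ↔ e ∈ A) ∧
      (∀ e, e ∈ L1 ↔ e ∈ B) ∧ L0.length = n ∧ L1.length = n ∧ AuxAligned L0 L1 := by
  intro n
  induction n using Nat.strong_induction_on with
  | _ n ih =>
    intro A B hA hB hd hAc hBc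
    rcases Nat.eq_zero_or_pos n with rfl | hpos
    · refine ⟨[], [], List.nodup_nil, List.nodup_nil, ?_, ?_, rfl, rfl, ?_⟩
      · intro e; simp [Finset.card_eq_zero.mp hAc]
      · intro e; simp [Finset.card_eq_zero.mp hBc]
      · intro p q e f he hf hadj; simp at he
    · classical
      obtain ⟨a, ha⟩ := Finset.card_pos.mp (by omega : 0 < A.card)
      obtain ⟨w, hw, haw, hcl⟩ := aux_exists_walk hA hB (Or.inl ha)
      have hwne : 0 < w.length := List.length_pos_iff.mpr (List.ne_nil_of_mem haw)
      have hchunk : ∃ D0 D1 : List (Sym2 V), D0.Nodup ∧ D1.Nodup ∧ (∀ e ∈ D0, e ∈ A) ∧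
          (∀ e ∈ D1, e ∈ B) ∧ D0.length = D1.length ∧ 0 < D0.length ∧ AuxAligned D0 D1 ∧
          (∀ x e, (x ∈ D0 ∨ x ∈ D1) → (e ∈ A ∨ e ∈ B) → EdgesAdj x e →
            (e ∈ D0 ∨ e ∈ D1)) := by
        rcases hw.2.1 _ (List.getElem_mem hwne) with h0 | h0
        · exact aux_build_chunk hA hB hd (by omega) hw hcl hwne h0
        · obtain ⟨D1, D0, p1, p2, p3, p4, p5, p6, p7, p8⟩ :=
            aux_build_chunk hB hA (fun e h1 h2 => hd e h2 h1) (by omega)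
              (aux_pw_swap hw) (aux_closed_swap hcl) hwne h0
          exact ⟨D0, D1, p2, p1, p4, p3, p5.symm, by omega, aux_aligned_symm p7,
            fun x e hx he hadj => (p8 x e hx.symm he.symm hadj).symm⟩
      obtain ⟨D0, D1, hD0nd, hD1nd, hD0A, hD1B, hDlen, hDpos, hDal, hDcl⟩ := hchunk
      have hD0sub : D0.toFinset ⊆ A := fun x hx => hD0A x (List.mem_toFinset.mp hx)
      have hD1sub : D1.toFinset ⊆ B := fun x hx => hD1B x (List.mem_toFinset.mp hx)
      have hcard0 : D0.toFinset.card = D0.length := List.toFinset_card_of_nodup hD0nd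
      have hcard1 : D1.toFinset.card = D1.length := List.toFinset_card_of_nodup hD1nd
      have hkn : D0.length ≤ n := by
        rw [← hAc, ← hcard0]; exact Finset.card_le_card hD0sub
      obtain ⟨L0, L1, h1, h2, h3, h4, h5, h6, h7⟩ :=
        ih (n - D0.length) (by omega) (A \ D0.toFinset) (B \ D1.toFinset)
          (fun e he f hf => hA e (Finset.mem_sdiff.mp he).1 f (Finset.mem_sdiff.mp hf).1)
          (fun e he f hf => hB e (Finset.mem_sdiff.mp he).1 f (Finset.mem_sdiff.mp hf).1)
          (fun e he hf => hd e (Finset.mem_sdiff.mp he).1 (Finset.mem_sdiff.mp hf).1)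
          (by rw [Finset.card_sdiff_of_subset hD0sub, hAc, hcard0])
          (by rw [Finset.card_sdiff_of_subset hD1sub, hBc, hcard1]; omega)
      refine ⟨D0 ++ L0, D1 ++ L1, ?_, ?_, ?_, ?_, ?_, ?_, ?_⟩
      · refine List.Nodup.append hD0nd h1 ?_
        intro x hx hx'
        exact (Finset.mem_sdiff.mp ((h3 x).mp hx')).2 (List.mem_toFinset.mpr hx)
      · refine List.Nodup.append hD1nd h2 ?_
        intro x hx hx'
        exact (Finset.mem_sdiff.mp ((h4 x).mp hx')).2 (List.mem_toFinset.mpr hx)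
      · intro e
        rw [List.mem_append, h3 e, Finset.mem_sdiff]
        constructor
        · rintro (h | ⟨h, -⟩)
          · exact hD0A e h
          · exact h
        · intro h
          by_cases hc : e ∈ D0
          · exact Or.inl hc
          · exact Or.inr ⟨h, fun hcc => hc (List.mem_toFinset.mp hcc)⟩
      · intro e
        rw [List.mem_append, h4 e, Finset.mem_sdiff]
        constructor
        · rintro (h | ⟨h, -⟩)
          · exact hD1B e h
          · exact h
        · intro h
          by_cases hc : e ∈ D1
          · exact Or.inl hc
          · exact Or.inr ⟨h, fun hcc => hc (List.mem_toFinset.mp hcc)⟩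
      · rw [List.length_append, h5]; omega
      · rw [List.length_append, h6]; omega
      · refine aux_compose hDal h7 hDlen ?_ ?_
        · intro e he f hf hadj
          have hfB : f ∈ B \ D1.toFinset := (h4 f).mp hf
          rcases hDcl e f (Or.inl he) (Or.inr (Finset.mem_sdiff.mp hfB).1) hadj with h | h
          · exact hd f (hD0A f h) (Finset.mem_sdiff.mp hfB).1
          · exact (Finset.mem_sdiff.mp hfB).2 (List.mem_toFinset.mpr h)
        · intro e he f hf hadj
          have heA : e ∈ A \ D0.toFinset := (h3 e).mp he
          rcases hDcl f e (Or.inr hf) (Or.inl (Finset.mem_sdiff.mp heA).1)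
              (aux_adj_symm hadj) with h | h
          · exact (Finset.mem_sdiff.mp heA).2 (List.mem_toFinset.mpr h)
          · exact hd e (Finset.mem_sdiff.mp heA).1 (hD1B e h)

private lemma aux_final {V : Type*} [Fintype V] (t : ℕ)
    (ht : 1 ≤ t) (H0 H1 : SimpleGraph V)
    (h0 : ∀ e ∈ H0.edgeSet, ∀ e' ∈ H0.edgeSet, ¬ EdgesAdj e e')
    (h1 : ∀ e ∈ H1.edgeSet, ∀ e' ∈ H1.edgeSet, ¬ EdgesAdj e e')
    (hdisj : Disjoint H0.edgeSet H1.edgeSet)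
    (hs0 : Nat.card H0.edgeSet = t) (hs1 : Nat.card H1.edgeSet = t) :
    ∃ L0 L1 : List (Sym2 V),
      (L0.Nodup ∧ ∀ e, e ∈ L0 ↔ e ∈ H0.edgeSet) ∧
      (L1.Nodup ∧ ∀ e, e ∈ L1 ↔ e ∈ H1.edgeSet) ∧
      t - 1 ≤ sSup {s | 1 ≤ s ∧ s ≤ (L0 ++ L1).length ∧ ∀ i j e e', i < j →
        (L0 ++ L1)[i]? = some e → (L0 ++ L1)[j]? = some e' → EdgesAdj e e' →
        s ≤ min (j - i) ((L0 ++ L1).length - (j - i))} := by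
  classical
  have hfin0 : H0.edgeSet.Finite := Set.toFinite _
  have hfin1 : H1.edgeSet.Finite := Set.toFinite _
  have hmemA : ∀ e, e ∈ hfin0.toFinset ↔ e ∈ H0.edgeSet := fun e => Set.Finite.mem_toFinset _
  have hmemB : ∀ e, e ∈ hfin1.toFinset ↔ e ∈ H1.edgeSet := fun e => Set.Finite.mem_toFinset _
  have hAcard : hfin0.toFinset.card = t := by
    rw [← hs0, Nat.card_coe_set_eq, Set.ncard_eq_toFinset_card _ hfin0]
  have hBcard : hfin1.toFinset.card = t := by
    rw [← hs1, Nat.card_coe_set_eq, Set.ncard_eq_toFinset_card _ hfin1]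
  obtain ⟨L0, L1, hnd0, hnd1, hm0, hm1, hlen0, hlen1, hal⟩ :=
    aux_rec t hfin0.toFinset hfin1.toFinset
      (fun e he f hf => h0 e ((hmemA e).mp he) f ((hmemA f).mp hf))
      (fun e he f hf => h1 e ((hmemB e).mp he) f ((hmemB f).mp hf))
      (fun e he hf => (Set.disjoint_left.mp hdisj) ((hmemA e).mp he) ((hmemB e).mp hf))
      hAcard hBcard
  refine ⟨L0, L1, ⟨hnd0, fun e => (hm0 e).trans (hmemA e)⟩,
    ⟨hnd1, fun e => (hm1 e).trans (hmemB e)⟩, ?_⟩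
  rcases Nat.lt_or_ge t 2 with ht2 | ht2
  · have hzero : t - 1 = 0 := by omega
    rw [hzero]; exact Nat.zero_le _
  · have hlenL : (L0 ++ L1).length = 2 * t := by rw [List.length_append, hlen0, hlen1]; omega
    refine le_csSup ⟨(L0 ++ L1).length, fun s hs => hs.2.1⟩ ?_
    refine ⟨by omega, by omega, ?_⟩
    intro i j e f hij hei hej hadj
    rw [List.getElem?_append] at hei hej
    rw [hlenL]
    split_ifs at hei hej with hi hj hj
    · exact absurd hadj (h0 e ((hmemA e).mp ((hm0 e).mp
        (by obtain ⟨hh, rfl⟩ := List.getElem?_eq_some_iff.mp hei; exact List.getElem_mem hh)))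
        f ((hmemA f).mp ((hm0 f).mp
        (by obtain ⟨hh, rfl⟩ := List.getElem?_eq_some_iff.mp hej; exact List.getElem_mem hh))))
    · have hj2 : j - L0.length < L1.length := (List.getElem?_eq_some_iff.mp hej).1
      have hb := hal i (j - L0.length) e f hei hej hadj
      omega
    · omega
    · exact absurd hadj (h1 e ((hmemB e).mp ((hm1 e).mp
        (by obtain ⟨hh, rfl⟩ := List.getElem?_eq_some_iff.mp hei; exact List.getElem_mem hh)))
        f ((hmemB f).mp ((hm1 f).mp
        (by obtain ⟨hh, rfl⟩ := List.getElem?_eq_some_iff.mp hej; exact List.getElem_mem hh))))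

end AuxDev

/-- Lemma: let `H_0`, `H_1` be edge-disjoint matchings of equal size `t ≥ 1`.  Then there
are orderings `ℓ_0` of `H_0` and `ℓ_1` of `H_1` with `cms(ℓ_0 ∨ ℓ_1) ≥ t - 1`. -/
theorem exists_orderings_cmsList_ge_of_matchings {V : Type*} [Fintype V] (t : ℕ)
    (ht : 1 ≤ t) (H0 H1 : SimpleGraph V)
    (h0 : IsMatchingGraph H0) (h1 : IsMatchingGraph H1)
    (hdisj : Disjoint H0.edgeSet H1.edgeSet)
    (hs0 : numEdges H0 = t) (hs1 : numEdges H1 = t) :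
    ∃ L0 L1 : List (Sym2 V), IsOrdering H0 L0 ∧ IsOrdering H1 L1 ∧
      t - 1 ≤ cmsList (L0 ++ L1) := by
  obtain ⟨L0, L1, hA, hB, hle⟩ := aux_final t ht H0 H1 h0 h1 hdisj hs0 hs1
  exact ⟨L0, L1, hA, hB, hle⟩
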